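/- arXiv:2002.09130 — 3 statements merged into one kernel-verified Lean document; each statement's English description precedes it below -/
import Mathlib

section
/- Let r ≥ 1 be an integer. For any nonnegative reals x_1, ..., x_r satisfying x_1 + x_2 + ... + x_{r-1} + 2x_r ≥ 1/2, with x_0 := 0, one has 4x_1² + Σ_{i=2}^{r} (2x_i - x_{i-1})² ≥ 1/(4r). -/
lemma tele4 (x : ℕ → ℝ) (hx0 : x 0 = 0) :
    ∀ r, 1 ≤ r → ∑ i ∈ Finset.Icc 1 r, (2 * x i - x (i - 1)) =
      (∑ i ∈ Finset.Icc 1 (r - 1), x i) + 2 * x r := by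
  intro r hr
  induction r, hr using Nat.le_induction with
  | base => simp [hx0]
  | succ n hn ih =>
    rw [show Finset.Icc 1 (n+1) = insert (n+1) (Finset.Icc 1 n) by
        ext i; simp; omega,
      Finset.sum_insert (by simp), ih,
      show n + 1 - 1 = n from rfl,
      show Finset.Icc 1 n = insert n (Finset.Icc 1 (n-1)) by
        ext i; simp; omega,
      Finset.sum_insert (by simp; omega)]
    ring

theorem stmt4 (r : ℕ) (hr : 1 ≤ r) (x : ℕ → ℝ) (hx0 : x 0 = 0)
    (hnn : ∀ i ∈ Finset.Icc 1 r, 0 ≤ x i)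
    (hsum : (∑ i ∈ Finset.Icc 1 (r - 1), x i) + 2 * x r ≥ 1/2) :
    4 * (x 1)^2 + ∑ i ∈ Finset.Icc 2 r, (2 * x i - x (i - 1))^2 ≥ 1 / (4 * r) := by
  have hsplit : 4 * (x 1)^2 + ∑ i ∈ Finset.Icc 2 r, (2 * x i - x (i - 1))^2
      = ∑ i ∈ Finset.Icc 1 r, (2 * x i - x (i - 1))^2 := by
    rw [show Finset.Icc 1 r = insert 1 (Finset.Icc 2 r) by
        ext i; simp; omega,
      Finset.sum_insert (by simp)]
    simp [hx0]; ring
  have hkey : ∑ i ∈ Finset.Icc 1 r, (2 * x i - x (i - 1)) ≥ 1/2 := by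
    rw [tele4 x hx0 r hr]; exact hsum
  have hcs := sq_sum_le_card_mul_sum_sq (s := Finset.Icc 1 r)
    (f := fun i => 2 * x i - x (i - 1))
  rw [Nat.card_Icc] at hcs
  have hcard : ((r + 1 - 1 : ℕ) : ℝ) = (r : ℝ) := by
    simp
  rw [hcard] at hcs
  have hsq : (1/2 : ℝ)^2 ≤ (∑ i ∈ Finset.Icc 1 r, (2 * x i - x (i - 1)))^2 :=
    pow_le_pow_left₀ (by norm_num) hkey 2
  have hrpos : (0:ℝ) < r := by exact_mod_cast hr
  rw [hsplit, ge_iff_le, div_le_iff₀ (by positivity)]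
  nlinarith [hcs, hsq]
end

section
/- With the same setup, the mixed second partial derivatives of p satisfy ∂²p/∂x_i∂x_j ∈ {0, 2α(1+δ)} for i ≠ j (nonzero only when j = i±1 and the corresponding h-argument lies in the quadratic regime). Consequently, for q = 1 - e^{-p}, the second partials satisfy ∂²q/∂x_i∂x_j = (∂²p/∂x_i∂x_j - (∂p/∂x_i)(∂p/∂x_j)) e^{-p} ≤ (2α(1+δ) - (1 - 4α(1+δ))²) e^{-p} ≤ 0, provided 0 < α ≤ 1/16 and 0 < δ ≤ 1. -/
/-- The piecewise penalty function `h` from the poly-round lower bound construction. -/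
noncomputable def hPiece (α ε : ℝ) (x : ℝ) : ℝ :=
  if x ≤ ε then 0 else if x ≤ 2 + ε then α * (x - ε)^2 else 4 * α * (x - 1 - ε)

/-- The function `p(x₁,…,x_r) = Σ xᵢ - Σ h((1+δ)x_{i+1} - x_i)` (with `x 0 = 0`). -/
noncomputable def pFun (α δ ε : ℝ) (r : ℕ) (x : ℕ → ℝ) : ℝ :=
  (∑ i ∈ Finset.Icc 1 r, x i)
    - ∑ i ∈ Finset.range r, hPiece α ε ((1 + δ) * x (i + 1) - x i)

/-- derivative of `hPiece` -/
noncomputable def gd (α ε : ℝ) (x : ℝ) : ℝ :=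
  2*α*max (x-ε) 0 - 2*α*max (x-2-ε) 0

lemma hasDerivAt_maxsq (t : ℝ) : HasDerivAt (fun z : ℝ => max z 0 ^ 2) (2 * max t 0) t := by
  rcases lt_trichotomy t 0 with ht | ht | ht
  · have hev : (fun z : ℝ => max z 0 ^ 2) =ᶠ[nhds t] fun _ => (0:ℝ) := by
      filter_upwards [Iio_mem_nhds ht] with z hz
      rw [max_eq_right (le_of_lt hz)]; norm_num
    rw [max_eq_right ht.le, mul_zero]
    exact (hasDerivAt_const t (0:ℝ)).congr_of_eventuallyEq hev
  · subst ht
    have h0 : 2 * max (0:ℝ) 0 = 0 := by simp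
    rw [h0, hasDerivAt_iff_isLittleO]
    have h1 : (fun z : ℝ => max z 0 ^ 2) =O[nhds 0] fun z => z * z := by
      apply Asymptotics.isBigO_of_le
      intro z
      have h2 : max z 0 ^ 2 ≤ z * z := by
        rcases le_total z 0 with h | h
        · rw [max_eq_right h]; simpa using mul_self_nonneg z
        · rw [max_eq_left h]; nlinarith
      have h3 : (0:ℝ) ≤ max z 0 ^ 2 := by positivity
      rw [Real.norm_eq_abs, Real.norm_eq_abs, abs_of_nonneg h3,
        abs_of_nonneg (mul_self_nonneg z)]
      exact h2
    have h2 : (fun z : ℝ => z * z) =o[nhds 0] fun z => z := by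
      rw [Asymptotics.isLittleO_iff]
      intro c hc
      filter_upwards [Metric.ball_mem_nhds (0:ℝ) hc] with z hz
      rw [Metric.mem_ball, Real.dist_eq, sub_zero] at hz
      rw [Real.norm_eq_abs, Real.norm_eq_abs, abs_mul]
      exact mul_le_mul_of_nonneg_right hz.le (abs_nonneg z)
    simpa using h1.trans_isLittleO h2
  · have hev : (fun z : ℝ => max z 0 ^ 2) =ᶠ[nhds t] fun z => z ^ 2 := by
      filter_upwards [Ioi_mem_nhds ht] with z hz
      rw [max_eq_left (le_of_lt hz)]
    rw [max_eq_left ht.le]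
    have h := hasDerivAt_pow 2 t
    have h2 : ((2:ℕ):ℝ) * t ^ (2-1) = 2 * t := by norm_num
    rw [h2] at h
    exact h.congr_of_eventuallyEq hev

lemma hPiece_eq (α ε x : ℝ) :
    hPiece α ε x = α * max (x - ε) 0 ^ 2 - α * max (x - 2 - ε) 0 ^ 2 := by
  unfold hPiece
  rcases le_or_gt x ε with h | h
  · rw [if_pos h, max_eq_right (by linarith), max_eq_right (by linarith)]; ring
  · rw [if_neg (not_le.2 h), max_eq_left (by linarith)]
    rcases le_or_gt x (2 + ε) with h2 | h2
    · rw [if_pos h2, max_eq_right (by linarith)]; ring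
    · rw [if_neg (not_le.2 h2), max_eq_left (by linarith)]; ring

lemma hasDerivAt_hPiece (α ε x : ℝ) : HasDerivAt (hPiece α ε) (gd α ε x) x := by
  have hfun : hPiece α ε = fun y => α * max (y - ε) 0 ^ 2 - α * max (y - 2 - ε) 0 ^ 2 :=
    funext (hPiece_eq α ε)
  rw [hfun]
  have h1 : HasDerivAt (fun y : ℝ => max (y - ε) 0 ^ 2) (2 * max (x - ε) 0) x := by
    have := (hasDerivAt_maxsq (x - ε)).comp x ((hasDerivAt_id x).sub_const ε)
    simpa [Function.comp_def] using this
  have h2 : HasDerivAt (fun y : ℝ => max (y - 2 - ε) 0 ^ 2) (2 * max (x - 2 - ε) 0) x := by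
    have h3 : HasDerivAt (fun y : ℝ => y - 2 - ε) 1 x := by
      simpa using ((hasDerivAt_id x).sub_const 2).sub_const ε
    have := (hasDerivAt_maxsq (x - 2 - ε)).comp x h3
    simpa [Function.comp_def] using this
  have := (h1.const_mul α).fun_sub (h2.const_mul α)
  refine this.congr_deriv ?_
  unfold gd; ring

lemma gd_cont (α ε : ℝ) : Continuous (gd α ε) := by
  unfold gd; fun_prop

lemma gd_nonneg {α : ℝ} (hα : 0 ≤ α) (ε x : ℝ) : 0 ≤ gd α ε x := by
  unfold gd
  have h : max (x-2-ε) 0 ≤ max (x-ε) 0 := max_le_max (by linarith) le_rfl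
  nlinarith

lemma gd_le {α : ℝ} (hα : 0 ≤ α) (ε x : ℝ) : gd α ε x ≤ 4*α := by
  unfold gd
  have h1 : max (x-ε) 0 ≤ max (x-2-ε) 0 + 2 := by
    apply max_le
    · have := le_max_left (x-2-ε) (0:ℝ); linarith
    · have := le_max_right (x-2-ε) (0:ℝ); linarith
  nlinarith [le_max_right (x-2-ε) (0:ℝ)]

lemma hasDerivAt_maxaff {c d u : ℝ} (h : c*u + d ≠ 0) :
    HasDerivAt (fun v => max (c*v + d) 0) (if 0 < c*u + d then c else 0) u := by
  have hcont : Continuous fun v : ℝ => c*v + d := by continuity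
  rcases h.lt_or_gt with hlt | hgt
  · rw [if_neg (by linarith)]
    have hev : (fun v => max (c*v + d) 0) =ᶠ[nhds u] fun _ => (0:ℝ) := by
      filter_upwards [(isOpen_Iio.preimage hcont).mem_nhds (show u ∈ _ from hlt)] with v hv
      exact max_eq_right (le_of_lt hv)
    exact (hasDerivAt_const u (0:ℝ)).congr_of_eventuallyEq hev
  · rw [if_pos hgt]
    have hb : HasDerivAt (fun v : ℝ => c*v + d) c u := by
      simpa using ((hasDerivAt_id u).const_mul c).add_const d
    have hev : (fun v => max (c*v + d) 0) =ᶠ[nhds u] fun v => c*v + d := by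
      filter_upwards [(isOpen_Ioi.preimage hcont).mem_nhds (show u ∈ _ from hgt)] with v hv
      exact max_eq_left (le_of_lt hv)
    exact hb.congr_of_eventuallyEq hev

lemma not_diff_maxaff {c d u : ℝ} (hc : c ≠ 0) (h : c*u + d = 0) :
    ¬ DifferentiableAt ℝ (fun v => max (c*v + d) 0) u := by
  intro hdiff
  have habs : DifferentiableAt ℝ (fun v => |c*v + d|) u := by
    have heq : (fun v => |c*v + d|) = fun v => 2 * max (c*v+d) 0 - (c*v + d) := by
      funext v
      rcases le_total (c*v+d) 0 with h1 | h1
      · rw [abs_of_nonpos h1, max_eq_right h1]; ring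
      · rw [abs_of_nonneg h1, max_eq_left h1]; ring
    rw [heq]
    exact (hdiff.const_mul 2).sub ((differentiableAt_fun_id.const_mul c).add_const d)
  have h0 : ((0:ℝ) - d)/c = u := by
    field_simp
    linarith
  rw [← h0] at habs
  have hg : DifferentiableAt ℝ (fun t : ℝ => (t - d)/c) 0 :=
    (differentiableAt_fun_id.sub_const d).div_const c
  have hco := DifferentiableAt.comp (0:ℝ) habs hg
  have heq2 : ((fun v => |c*v + d|) ∘ (fun t : ℝ => (t - d)/c)) = fun t : ℝ => |t| := by
    funext t
    simp only [Function.comp]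
    congr 1
    field_simp
    ring
  rw [heq2] at hco
  exact not_differentiableAt_abs_zero hco

lemma gdaff_eq (α ε c d : ℝ) : (fun v => gd α ε (c*v + d)) =
    fun v => 2*α*max (c*v + (d-ε)) 0 - 2*α*max (c*v + (d-(2+ε))) 0 := by
  funext v; unfold gd
  rw [show c*v + d - ε = c*v + (d-ε) by ring, show c*v + d - 2 - ε = c*v + (d-(2+ε)) by ring]

lemma gdaff_hasDerivAt {α ε c d u : ℝ} (h1 : c*u + d ≠ ε) (h2 : c*u + d ≠ 2 + ε) :
    ∃ m, HasDerivAt (fun v => gd α ε (c*v + d)) m u ∧ (m = 0 ∨ m = 2*α*c) := by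
  have h1' : c*u + (d-ε) ≠ 0 := fun hx => h1 (by linarith)
  have h2' : c*u + (d-(2+ε)) ≠ 0 := fun hx => h2 (by linarith)
  have hd1 := hasDerivAt_maxaff h1'
  have hd2 := hasDerivAt_maxaff h2'
  have hD := (hd1.const_mul (2*α)).fun_sub (hd2.const_mul (2*α))
  rw [← gdaff_eq] at hD
  refine ⟨_, hD, ?_⟩
  rcases lt_or_gt_of_ne h1' with hz1 | hz1
  · rw [if_neg (by linarith), if_neg (by linarith)]
    left; ring
  · rcases lt_or_gt_of_ne h2' with hz2 | hz2
    · rw [if_pos hz1, if_neg (by linarith)]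
      right; ring
    · rw [if_pos hz1, if_pos hz2]
      left; ring

lemma gdaff_not_diff {α ε c d u : ℝ} (hα : 0 < α) (hc : c ≠ 0)
    (h : c*u + d = ε ∨ c*u + d = 2 + ε) :
    ¬ DifferentiableAt ℝ (fun v => gd α ε (c*v + d)) u := by
  intro hdiff
  rw [gdaff_eq] at hdiff
  have hα2 : (2*α : ℝ) ≠ 0 := by positivity
  rcases h with h | h
  · have hden : c*u + (d-(2+ε)) ≠ 0 := by intro hx; linarith
    have hM2 : DifferentiableAt ℝ (fun v => max (c*v + (d-(2+ε))) 0) u :=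
      (hasDerivAt_maxaff hden).differentiableAt
    have hM1 : DifferentiableAt ℝ (fun v => max (c*v + (d-ε)) 0) u := by
      have heq : (fun v => max (c*v + (d-ε)) 0) = fun v =>
          (1/(2*α)) * ((2*α*max (c*v + (d-ε)) 0 - 2*α*max (c*v + (d-(2+ε))) 0)
            + 2*α*max (c*v + (d-(2+ε))) 0) := by
        funext v; field_simp; ring
      rw [heq]
      exact (hdiff.add (hM2.const_mul (2*α))).const_mul (1/(2*α))
    exact not_diff_maxaff hc (by linarith) hM1
  · have hden : c*u + (d-ε) ≠ 0 := by intro hx; linarith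
    have hM1 : DifferentiableAt ℝ (fun v => max (c*v + (d-ε)) 0) u :=
      (hasDerivAt_maxaff hden).differentiableAt
    have hM2 : DifferentiableAt ℝ (fun v => max (c*v + (d-(2+ε))) 0) u := by
      have heq : (fun v => max (c*v + (d-(2+ε))) 0) = fun v =>
          (1/(2*α)) * (2*α*max (c*v + (d-ε)) 0
            - (2*α*max (c*v + (d-ε)) 0 - 2*α*max (c*v + (d-(2+ε))) 0)) := by
        funext v; field_simp; ring
      rw [heq]
      exact ((hM1.const_mul (2*α)).sub hdiff).const_mul (1/(2*α))
    exact not_diff_maxaff hc (by linarith) hM2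
noncomputable def Dval (α δ ε : ℝ) (r : ℕ) (y : ℕ → ℝ) (i : ℕ) (t : ℝ) : ℝ :=
  1 - (1+δ) * gd α ε ((1+δ)*t - y (i-1))
    + (if i < r then gd α ε ((1+δ)*y (i+1) - t) else 0)

lemma hasDerivAt_pcoord (α δ ε : ℝ) {r i : ℕ} (hi1 : 1 ≤ i) (hir : i ≤ r)
    (y : ℕ → ℝ) (t : ℝ) :
    HasDerivAt (fun s => pFun α δ ε r (Function.update y i s)) (Dval α δ ε r y i t) t := by
  have hA : ∀ k, HasDerivAt (fun s => Function.update y i s k)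
      (if k = i then (1:ℝ) else 0) t := by
    intro k
    by_cases h : k = i
    · subst h
      rw [if_pos rfl]
      simp only [Function.update_self]
      exact hasDerivAt_id t
    · simp only [Function.update_of_ne h, if_neg h]
      exact hasDerivAt_const t _
  have h1 : HasDerivAt (fun s => ∑ k ∈ Finset.Icc 1 r, Function.update y i s k) 1 t := by
    have h := HasDerivAt.fun_sum (fun k (_ : k ∈ Finset.Icc 1 r) => hA k)
    rwa [Finset.sum_ite_eq' (Finset.Icc 1 r) i (fun _ => (1:ℝ)),
      if_pos (Finset.mem_Icc.2 ⟨hi1, hir⟩)] at h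
  have hterm : ∀ k, HasDerivAt
      (fun s => hPiece α ε ((1+δ) * Function.update y i s (k+1) - Function.update y i s k))
      (gd α ε ((1+δ) * Function.update y i t (k+1) - Function.update y i t k) *
        ((1+δ) * (if k+1 = i then (1:ℝ) else 0) - (if k = i then (1:ℝ) else 0))) t := by
    intro k
    have hin : HasDerivAt
        (fun s => (1+δ) * Function.update y i s (k+1) - Function.update y i s k)
        ((1+δ) * (if k+1 = i then (1:ℝ) else 0) - (if k = i then (1:ℝ) else 0)) t :=
      ((hA (k+1)).const_mul (1+δ)).sub (hA k)
    have := (hasDerivAt_hPiece α ε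
      ((1+δ) * Function.update y i t (k+1) - Function.update y i t k)).comp t hin
    simpa [Function.comp_def] using this
  have h2 := HasDerivAt.fun_sum (fun k (_ : k ∈ Finset.range r) => hterm k)
  have hsum : (∑ k ∈ Finset.range r,
      gd α ε ((1+δ) * Function.update y i t (k+1) - Function.update y i t k) *
        ((1+δ) * (if k+1 = i then (1:ℝ) else 0) - (if k = i then (1:ℝ) else 0)))
      = (1+δ) * gd α ε ((1+δ)*t - y (i-1))
        - (if i < r then gd α ε ((1+δ)*y (i+1) - t) else 0) := by
    have hstep : ∀ k ∈ Finset.range r,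
        gd α ε ((1+δ) * Function.update y i t (k+1) - Function.update y i t k) *
          ((1+δ) * (if k+1 = i then (1:ℝ) else 0) - (if k = i then (1:ℝ) else 0))
        = (if k = i-1 then (1+δ) * gd α ε ((1+δ)*t - y (i-1)) else 0)
          - (if k = i then gd α ε ((1+δ)*y (i+1) - t) else 0) := by
      intro k _
      by_cases h1k : k = i - 1
      · subst h1k
        have e1 : i - 1 + 1 = i := by omega
        have e2 : i - 1 ≠ i := by omega
        rw [e1, if_pos rfl, if_neg e2, Function.update_self, Function.update_of_ne e2,
          if_pos rfl, if_neg e2]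
        ring
      · have h2k : k + 1 ≠ i := by omega
        rw [if_neg h2k, if_neg h1k]
        by_cases h3 : k = i
        · subst h3
          have e3 : k + 1 ≠ k := by omega
          rw [if_pos rfl, if_pos rfl, Function.update_self, Function.update_of_ne e3]
          ring
        · rw [if_neg h3, if_neg h3]; ring
    rw [Finset.sum_congr rfl hstep, Finset.sum_sub_distrib,
      Finset.sum_ite_eq' (Finset.range r) (i-1), Finset.sum_ite_eq' (Finset.range r) i,
      if_pos (Finset.mem_range.2 (by omega : i - 1 < r))]
    simp only [Finset.mem_range]
  rw [hsum] at h2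
  have h3 := h1.sub h2
  have hDv : Dval α δ ε r y i t
      = 1 - ((1+δ) * gd α ε ((1+δ)*t - y (i-1))
          - (if i < r then gd α ε ((1+δ)*y (i+1) - t) else 0)) := by
    unfold Dval; ring
  rw [hDv]
  simp only [pFun]
  exact h3

lemma hasDerivAt_qcoord (α δ ε : ℝ) {r i : ℕ} (hi1 : 1 ≤ i) (hir : i ≤ r)
    (y : ℕ → ℝ) (t : ℝ) :
    HasDerivAt (fun s => 1 - Real.exp (-(pFun α δ ε r (Function.update y i s))))
      (Dval α δ ε r y i t * Real.exp (-(pFun α δ ε r (Function.update y i t)))) t := by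
  have h := hasDerivAt_pcoord α δ ε hi1 hir y t
  have h2 := (h.fun_neg.exp).const_sub 1
  refine h2.congr_deriv ?_
  ring

lemma Dval_ge {α δ : ℝ} (hα : 0 ≤ α) (hδ : 0 ≤ δ) (ε : ℝ) (r : ℕ) (y : ℕ → ℝ) (i : ℕ) (t : ℝ) :
    1 - 4*(α*(1+δ)) ≤ Dval α δ ε r y i t := by
  unfold Dval
  have h1 := gd_le hα ε ((1+δ)*t - y (i-1))
  have h2 := gd_nonneg hα ε ((1+δ)*t - y (i-1))
  have h3 : (0:ℝ) ≤ if i < r then gd α ε ((1+δ)*y (i+1) - t) else 0 := by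
    split
    · exact gd_nonneg hα _ _
    · exact le_refl 0
  nlinarith [mul_le_mul_of_nonneg_left h1 (show (0:ℝ) ≤ 1+δ by linarith)]
lemma deriv_gdaff_mem {α δ ε : ℝ} (hα : 0 < α) {K s c d : ℝ}
    (hc : c ≠ 0) (hs : s ≠ 0) (hsc : s * (2*α*c) = 2*α*(1+δ)) (u : ℝ) :
    deriv (fun v => K + s * gd α ε (c*v + d)) u ∈ ({0, 2*α*(1+δ)} : Set ℝ) := by
  by_cases hk : c*u + d = ε ∨ c*u + d = 2 + ε
  · have hnd : ¬ DifferentiableAt ℝ (fun v => K + s * gd α ε (c*v + d)) u := by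
      intro hdiff
      apply gdaff_not_diff hα hc hk
      have heq : (fun v => gd α ε (c*v + d))
          = fun v => s⁻¹ * ((K + s * gd α ε (c*v+d)) - K) := by
        funext v; field_simp; ring
      rw [heq]
      exact (hdiff.sub_const K).const_mul s⁻¹
    rw [deriv_zero_of_not_differentiableAt hnd]
    exact Set.mem_insert _ _
  · push_neg at hk
    obtain ⟨m, hm, hm0⟩ := gdaff_hasDerivAt (α := α) hk.1 hk.2
    have hD : HasDerivAt (fun v => K + s * gd α ε (c*v + d)) (s * m) u :=
      (hm.const_mul s).const_add K
    rw [hD.deriv]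
    rcases hm0 with h | h
    · rw [h, mul_zero]; exact Set.mem_insert _ _
    · rw [h, hsc]; exact Set.mem_insert_of_mem _ rfl

lemma anti_aux {β : ℝ} (hβ : 0 < β) (hβ' : β ≤ 1/8)
    {D P : ℝ → ℝ} {k₁ k₂ : ℝ} (hk : k₁ < k₂)
    (hDcont : Continuous D)
    (hD' : ∀ v, v ≠ k₁ → v ≠ k₂ → ∃ dv, HasDerivAt D dv v ∧ 0 ≤ dv ∧ dv ≤ 2*β)
    (hDge : ∀ v, 1 - 4*β ≤ D v)
    (hP : ∀ v, ∃ pv, HasDerivAt P pv v ∧ 1 - 4*β ≤ pv) :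
    Antitone (fun v => D v * Real.exp (-(P v))) := by
  have hPdiff : Differentiable ℝ P := fun v => ((hP v).choose_spec.1).differentiableAt
  set F : ℝ → ℝ := fun v => D v * Real.exp (-(P v)) with hF
  have hFc : Continuous F :=
    hDcont.mul (Real.continuous_exp.comp hPdiff.continuous.neg)
  have key : ∀ v, v ≠ k₁ → v ≠ k₂ → DifferentiableAt ℝ F v ∧ deriv F v ≤ 0 := by
    intro v h1 h2
    obtain ⟨dv, hd, hd0, hd2⟩ := hD' v h1 h2
    obtain ⟨pv, hp, hpge⟩ := hP v
    have hder : HasDerivAt F (dv * Real.exp (-(P v)) + D v * (Real.exp (-(P v)) * (-pv))) v :=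
      hd.mul (hp.neg.exp)
    refine ⟨hder.differentiableAt, ?_⟩
    rw [hder.deriv]
    have h4 : (0:ℝ) < 1 - 4*β := by linarith
    have hDv := hDge v
    have hmul : (1-4*β)*(1-4*β) ≤ D v * pv :=
      mul_le_mul hDv hpge h4.le (by linarith)
    have hkey : 2*β ≤ (1-4*β)*(1-4*β) := by nlinarith
    have h5 : dv - D v * pv ≤ 0 := by linarith
    have hexp := Real.exp_pos (-(P v))
    nlinarith [mul_nonpos_of_nonpos_of_nonneg h5 hexp.le]
  have piece : ∀ S : Set ℝ, Convex ℝ S → (∀ v ∈ interior S, v ≠ k₁ ∧ v ≠ k₂) →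
      AntitoneOn F S := by
    intro S hS hmem
    refine antitoneOn_of_deriv_nonpos hS hFc.continuousOn
      (fun v hv => ((key v (hmem v hv).1 (hmem v hv).2).1).differentiableWithinAt)
      (fun v hv => (key v (hmem v hv).1 (hmem v hv).2).2)
  have hIic : AntitoneOn F (Set.Iic k₁) := by
    refine piece _ (convex_Iic _) ?_
    intro v hv; rw [interior_Iic] at hv
    exact ⟨ne_of_lt hv, ne_of_lt (lt_trans hv hk)⟩
  have hIcc : AntitoneOn F (Set.Icc k₁ k₂) := by
    refine piece _ (convex_Icc _ _) ?_
    intro v hv; rw [interior_Icc] at hv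
    exact ⟨ne_of_gt hv.1, ne_of_lt hv.2⟩
  have hIci : AntitoneOn F (Set.Ici k₂) := by
    refine piece _ (convex_Ici _) ?_
    intro v hv; rw [interior_Ici] at hv
    exact ⟨ne_of_gt (hk.trans hv), ne_of_gt hv⟩
  intro a b hab
  rcases le_total b k₁ with h1 | h1
  · exact hIic (Set.mem_Iic.2 (hab.trans h1)) (Set.mem_Iic.2 h1) hab
  · rcases le_total a k₂ with h2 | h2
    · rcases le_total a k₁ with h3 | h3
      · rcases le_total b k₂ with h4 | h4
        · exact le_trans (hIcc (Set.mem_Icc.2 ⟨le_refl k₁, hk.le⟩) (Set.mem_Icc.2 ⟨h1, h4⟩) h1)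
            (hIic (Set.mem_Iic.2 h3) (Set.mem_Iic.2 (le_refl k₁)) h3)
        · refine le_trans (hIci (Set.mem_Ici.2 (le_refl k₂)) (Set.mem_Ici.2 h4) h4) ?_
          refine le_trans (hIcc (Set.mem_Icc.2 ⟨le_refl k₁, hk.le⟩)
            (Set.mem_Icc.2 ⟨hk.le, le_refl k₂⟩) hk.le) ?_
          exact hIic (Set.mem_Iic.2 h3) (Set.mem_Iic.2 (le_refl k₁)) h3
      · rcases le_total b k₂ with h4 | h4
        · exact hIcc (Set.mem_Icc.2 ⟨h3, h2⟩) (Set.mem_Icc.2 ⟨h1, h4⟩) hab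
        · exact le_trans (hIci (Set.mem_Ici.2 (le_refl k₂)) (Set.mem_Ici.2 h4) h4)
            (hIcc (Set.mem_Icc.2 ⟨h3, h2⟩) (Set.mem_Icc.2 ⟨hk.le, le_refl k₂⟩) h2)
    · exact hIci (Set.mem_Ici.2 h2) (Set.mem_Ici.2 (h2.trans hab)) hab
set_option maxHeartbeats 1000000 in
theorem stmt9 (α δ ε : ℝ) (hα : 0 < α) (hα' : α ≤ 1/16) (hδ : 0 < δ) (hδ' : δ ≤ 1)
    (hε : 0 ≤ ε) (r : ℕ) (hr : 1 ≤ r) :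
    (2 * α * (1 + δ) - (1 - 4 * α * (1 + δ))^2 ≤ 0) ∧
    -- mixed second partials of p take values in {0, 2α(1+δ)} (wherever defined)
    (∀ x : ℕ → ℝ, ∀ i ∈ Finset.Icc 1 r, ∀ j ∈ Finset.Icc 1 r, i ≠ j → ∀ u : ℝ,
      deriv (fun v =>
        deriv (fun s => pFun α δ ε r (Function.update (Function.update x j v) i s)) (x i)) u
        ∈ ({0, 2 * α * (1 + δ)} : Set ℝ)) ∧
    -- the first partials of q = 1 - e^{-p} are nonincreasing in every other coordinate
    (∀ x : ℕ → ℝ, ∀ i ∈ Finset.Icc 1 r, ∀ j ∈ Finset.Icc 1 r, i ≠ j →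
      Antitone (fun v =>
        deriv (fun s =>
          1 - Real.exp (-(pFun α δ ε r (Function.update (Function.update x j v) i s))))
          (x i))) := by
  have h1δ : (0:ℝ) < 1 + δ := by linarith
  have hβ : 0 < α*(1+δ) := by positivity
  have hβ' : α*(1+δ) ≤ 1/8 := by nlinarith
  have hpart1 : 2 * α * (1 + δ) - (1 - 4 * α * (1 + δ))^2 ≤ 0 := by
    nlinarith [mul_nonneg (show (0:ℝ) ≤ 1/8 - α*(1+δ) by linarith)
      (show (0:ℝ) ≤ 1/2 - α*(1+δ) by linarith)]
  refine ⟨hpart1, ?_, ?_⟩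
  · -- Part 2
    intro x i hi j hj hij u
    obtain ⟨hi1, hir⟩ := Finset.mem_Icc.1 hi
    obtain ⟨hj1, hjr⟩ := Finset.mem_Icc.1 hj
    have hfd : (fun v => deriv
          (fun s => pFun α δ ε r (Function.update (Function.update x j v) i s)) (x i))
        = fun v => Dval α δ ε r (Function.update x j v) i (x i) := by
      funext v
      exact (hasDerivAt_pcoord α δ ε hi1 hir _ _).deriv
    rw [hfd]
    by_cases hb : j = i + 1
    · subst hb
      have hirlt : i < r := by omega
      have hDeq : (fun v => Dval α δ ε r (Function.update x (i+1) v) i (x i))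
          = fun v => (1 - (1+δ) * gd α ε ((1+δ)*(x i) - x (i-1)))
              + 1 * gd α ε ((1+δ)*v + (-(x i))) := by
        funext v
        unfold Dval
        rw [Function.update_of_ne (by omega : i - 1 ≠ i + 1), Function.update_self,
          if_pos hirlt, show (1+δ)*v - x i = (1+δ)*v + (-(x i)) by ring]
        ring
      rw [hDeq]
      exact deriv_gdaff_mem hα (by linarith : (1+δ:ℝ) ≠ 0) (by norm_num : (1:ℝ) ≠ 0)
        (by ring) u
    · by_cases hb2 : i = j + 1
      · subst hb2
        have hDeq : (fun v => Dval α δ ε r (Function.update x j v) (j+1) (x (j+1)))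
            = fun v => (1 + (if j+1 < r then gd α ε ((1+δ)*(x (j+1+1)) - x (j+1)) else 0))
                + (-(1+δ)) * gd α ε ((-1)*v + (1+δ)*(x (j+1))) := by
          funext v
          unfold Dval
          rw [show j + 1 - 1 = j by omega, Function.update_self,
            Function.update_of_ne (by omega : j+1+1 ≠ j),
            show (1+δ)*(x (j+1)) - v = (-1)*v + (1+δ)*(x (j+1)) by ring]
          ring
        rw [hDeq]
        exact deriv_gdaff_mem hα (by norm_num : (-1:ℝ) ≠ 0)
          (by intro h; nlinarith : (-(1+δ):ℝ) ≠ 0) (by ring) u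
      · have hDeq : (fun v => Dval α δ ε r (Function.update x j v) i (x i))
            = fun _ => Dval α δ ε r x i (x i) := by
          funext v
          unfold Dval
          rw [Function.update_of_ne (by omega : i - 1 ≠ j),
            Function.update_of_ne (by omega : i + 1 ≠ j)]
        rw [hDeq, deriv_const]
        exact Set.mem_insert _ _
  · -- Part 3
    intro x i hi j hj hij
    obtain ⟨hi1, hir⟩ := Finset.mem_Icc.1 hi
    obtain ⟨hj1, hjr⟩ := Finset.mem_Icc.1 hj
    have hupd : ∀ v : ℝ, Function.update (Function.update x j v) i (x i)
        = Function.update x j v := by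
      intro v
      have h := Function.update_of_ne hij v x
      conv_lhs => rw [← h]
      exact Function.update_eq_self i _
    have hfd : (fun v => deriv (fun s =>
          1 - Real.exp (-(pFun α δ ε r (Function.update (Function.update x j v) i s)))) (x i))
        = fun v => Dval α δ ε r (Function.update x j v) i (x i)
            * Real.exp (-(pFun α δ ε r (Function.update x j v))) := by
      funext v
      have h := hasDerivAt_qcoord α δ ε hi1 hir (Function.update x j v) (x i)
      rw [hupd v] at h
      exact h.deriv
    rw [hfd]
    have hP : ∀ v : ℝ, ∃ pv, HasDerivAt (fun w => pFun α δ ε r (Function.update x j w)) pv v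
        ∧ 1 - 4*(α*(1+δ)) ≤ pv :=
      fun v => ⟨Dval α δ ε r x j v, hasDerivAt_pcoord α δ ε hj1 hjr x v,
        Dval_ge hα.le hδ.le ε r x j v⟩
    have hDge : ∀ v : ℝ, 1 - 4*(α*(1+δ)) ≤ Dval α δ ε r (Function.update x j v) i (x i) :=
      fun v => Dval_ge hα.le hδ.le ε r _ i (x i)
    by_cases hb : j = i + 1
    · subst hb
      have hirlt : i < r := by omega
      set K : ℝ := 1 - (1+δ) * gd α ε ((1+δ)*(x i) - x (i-1)) with hK
      have hDeq : (fun v => Dval α δ ε r (Function.update x (i+1) v) i (x i))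
          = fun v => K + gd α ε ((1+δ)*v + (-(x i))) := by
        funext v
        unfold Dval
        rw [Function.update_of_ne (by omega : i - 1 ≠ i + 1), Function.update_self,
          if_pos hirlt, show (1+δ)*v - x i = (1+δ)*v + (-(x i)) by ring, hK]
      refine anti_aux (β := α*(1+δ)) hβ hβ'
        (k₁ := (x i + ε)/(1+δ)) (k₂ := (x i + (2+ε))/(1+δ)) ?_ ?_ ?_ hDge hP
      · rw [div_lt_div_iff₀ h1δ h1δ]
        nlinarith
      · rw [hDeq]
        have hcont : Continuous fun v : ℝ => (1+δ)*v + (-(x i)) :=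
          (continuous_const.mul continuous_id).add continuous_const
        have := (gd_cont α ε).comp hcont
        simp only [Function.comp_def] at this
        exact continuous_const.add this
      · intro v hv1 hv2
        have hz1 : (1+δ)*v + (-(x i)) ≠ ε := by
          intro hzz; apply hv1
          rw [eq_div_iff (by linarith : (1+δ:ℝ) ≠ 0)]
          linear_combination hzz
        have hz2 : (1+δ)*v + (-(x i)) ≠ 2 + ε := by
          intro hzz; apply hv2
          rw [eq_div_iff (by linarith : (1+δ:ℝ) ≠ 0)]
          linear_combination hzz
        obtain ⟨m, hm, hm0⟩ := gdaff_hasDerivAt (α := α) (ε := ε) hz1 hz2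
        refine ⟨m, ?_, ?_, ?_⟩
        · rw [hDeq]; exact hm.const_add K
        · rcases hm0 with h | h <;> rw [h] <;> nlinarith
        · rcases hm0 with h | h <;> rw [h] <;> nlinarith
    · by_cases hb2 : i = j + 1
      · subst hb2
        set K : ℝ := 1 + (if j+1 < r then gd α ε ((1+δ)*(x (j+1+1)) - x (j+1)) else 0) with hK
        have hDeq : (fun v => Dval α δ ε r (Function.update x j v) (j+1) (x (j+1)))
            = fun v => K + (-(1+δ)) * gd α ε ((-1)*v + (1+δ)*(x (j+1))) := by
          funext v
          unfold Dval
          rw [show j + 1 - 1 = j by omega, Function.update_self,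
            Function.update_of_ne (by omega : j+1+1 ≠ j),
            show (1+δ)*(x (j+1)) - v = (-1)*v + (1+δ)*(x (j+1)) by ring, hK]
          ring
        refine anti_aux (β := α*(1+δ)) hβ hβ'
          (k₁ := (1+δ)*(x (j+1)) - (2+ε)) (k₂ := (1+δ)*(x (j+1)) - ε) ?_ ?_ ?_ hDge hP
        · linarith
        · rw [hDeq]
          have hcont : Continuous fun v : ℝ => (-1)*v + (1+δ)*(x (j+1)) :=
            (continuous_const.mul continuous_id).add continuous_const
          have := (gd_cont α ε).comp hcont
          simp only [Function.comp_def] at this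
          exact continuous_const.add (continuous_const.mul this)
        · intro v hv1 hv2
          have hz1 : (-1)*v + (1+δ)*(x (j+1)) ≠ ε := by
            intro hzz; apply hv2; linarith
          have hz2 : (-1)*v + (1+δ)*(x (j+1)) ≠ 2 + ε := by
            intro hzz; apply hv1; linarith
          obtain ⟨m, hm, hm0⟩ := gdaff_hasDerivAt (α := α) (ε := ε) hz1 hz2
          refine ⟨-(1+δ) * m, ?_, ?_, ?_⟩
          · rw [hDeq]; exact (hm.const_mul (-(1+δ))).const_add K
          · rcases hm0 with h | h <;> rw [h] <;> nlinarith
          · rcases hm0 with h | h <;> rw [h] <;> nlinarith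
      · have hDeq : (fun v => Dval α δ ε r (Function.update x j v) i (x i))
            = fun _ => Dval α δ ε r x i (x i) := by
          funext v
          unfold Dval
          rw [Function.update_of_ne (by omega : i - 1 ≠ j),
            Function.update_of_ne (by omega : i + 1 ≠ j)]
        refine anti_aux (β := α*(1+δ)) hβ hβ' (k₁ := (0:ℝ)) (k₂ := (1:ℝ)) one_pos ?_ ?_ hDge hP
        · rw [hDeq]; exact continuous_const
        · intro v _ _
          refine ⟨0, ?_, le_refl 0, by nlinarith⟩
          rw [hDeq]
          exact hasDerivAt_const v _
end

section
/- Let r ≥ 1, δ > 0, ε ≥ 0 with δ/(3r) ≥ ε, δ/(3r) ≤ 2, and let h be the piecewise function h(x) = 0 for x ≤ ε, h(x) = α(x-ε)² for ε < x ≤ 2+ε, h(x) = 4α(x-1-ε) for x > 2+ε, with α > 0. Then for any nonnegative x_1, ..., x_r with Σ_{i=1}^{r-1} x_i + x_r ≥ 1/3 and x_0 = 0 (and 0 < δ ≤ 1), Σ_{i=0}^{r-1} h((1+δ)x_{i+1} - x_i) ≥ r·h(δ/(3r)) = rα(δ/(3r) - ε)². -/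
/-- Tangent line lower bound for `hPiece` at a point `c ∈ [ε, 2+ε]`. -/
lemma hPiece_tangent (α ε c t : ℝ) (hα : 0 < α) (hc1 : ε ≤ c) (hc2 : c ≤ 2 + ε) :
    hPiece α ε t ≥ α * (c - ε)^2 + 2 * α * (c - ε) * (t - c) := by
  unfold hPiece
  split_ifs with ht1 ht2
  · nlinarith [mul_nonneg hα.le (sub_nonneg.2 hc1), mul_nonneg (mul_nonneg hα.le (sub_nonneg.2 hc1)) (by linarith : (0:ℝ) ≤ c + ε - 2*t)]
  · nlinarith [sq_nonneg (t - c), hα.le]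
  · push_neg at ht1 ht2
    nlinarith [mul_nonneg (mul_nonneg hα.le (by linarith : (0:ℝ) ≤ 2 + ε - c)) (by linarith : (0:ℝ) ≤ 2*t - 2 - ε - c)]

theorem stmt10 (α δ ε : ℝ) (hα : 0 < α) (hδ : 0 < δ) (hδ' : δ ≤ 1) (hε : 0 ≤ ε)
    (r : ℕ) (hr : 1 ≤ r)
    (h1 : ε ≤ δ / (3 * r)) (h2 : δ / (3 * r) ≤ 2)
    (x : ℕ → ℝ) (hx0 : x 0 = 0) (hnn : ∀ i, 0 ≤ x i)
    (hsum : (∑ i ∈ Finset.Icc 1 (r - 1), x i) + x r ≥ 1/3) :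
    (∑ i ∈ Finset.range r, hPiece α ε ((1 + δ) * x (i + 1) - x i))
      ≥ r * α * (δ / (3 * r) - ε)^2 := by
  have hrR : (1:ℝ) ≤ (r:ℝ) := by exact_mod_cast hr
  set c : ℝ := δ / (3 * r) with hc
  have hrpos : (0:ℝ) < 3 * r := by linarith
  have hrc : (r:ℝ) * c = δ / 3 := by
    rw [hc]; field_simp
  have hc2 : c ≤ 2 + ε := by linarith
  -- the sum of arguments
  set a : ℕ → ℝ := fun i => (1 + δ) * x (i + 1) - x i with ha
  have hS : (∑ i ∈ Finset.range r, a i) ≥ δ / 3 := by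
    have hsplit : Finset.range r = insert 0 (Finset.Icc 1 (r - 1)) := by
      ext i
      simp only [Finset.mem_range, Finset.mem_insert, Finset.mem_Icc]
      omega
    have hT : (∑ i ∈ Finset.range r, x i) = ∑ i ∈ Finset.Icc 1 (r - 1), x i := by
      rw [hsplit, Finset.sum_insert (by simp), hx0, zero_add]
    have h1' : (∑ i ∈ Finset.range r, x (i + 1)) = ∑ i ∈ Finset.range (r + 1), x i := by
      rw [Finset.sum_range_succ' x r, hx0, add_zero]
    have hAB : (∑ i ∈ Finset.range r, a i)
        = (1 + δ) * (∑ i ∈ Finset.range (r + 1), x i) - ∑ i ∈ Finset.range r, x i := by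
      simp only [ha, Finset.sum_sub_distrib, ← Finset.mul_sum, h1']
    rw [hAB, Finset.sum_range_succ]
    set T := ∑ i ∈ Finset.range r, x i with hTdef
    have hTeq : T = ∑ i ∈ Finset.Icc 1 (r - 1), x i := hT
    have hxr := hnn r
    have hbound : T + x r ≥ 1 / 3 := by rw [hTeq]; linarith
    nlinarith [hnn r]
  -- apply tangent bound termwise
  set b : ℝ := α * (c - ε)^2 with hb
  set m : ℝ := 2 * α * (c - ε) with hm
  have hm0 : 0 ≤ m := by
    have : 0 ≤ c - ε := by linarith
    positivity
  have hterm : ∀ i ∈ Finset.range r, b + m * (a i - c) ≤ hPiece α ε (a i) := by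
    intro i _
    exact hPiece_tangent α ε c (a i) hα h1 hc2
  have hle := Finset.sum_le_sum hterm
  have hlin : (∑ i ∈ Finset.range r, (b + m * (a i - c)))
      = (r:ℝ) * b + m * ((∑ i ∈ Finset.range r, a i) - (r:ℝ) * c) := by
    rw [Finset.sum_add_distrib, Finset.sum_const, ← Finset.mul_sum, Finset.sum_sub_distrib,
      Finset.sum_const]
    simp [mul_comm]
  rw [hlin] at hle
  have hfin : (r:ℝ) * b ≤ (r:ℝ) * b + m * ((∑ i ∈ Finset.range r, a i) - (r:ℝ) * c) := by
    nlinarith [hS, hrc, hm0]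
  calc (r:ℝ) * α * (c - ε)^2 = (r:ℝ) * b := by rw [hb]; ring
    _ ≤ _ := le_trans hfin hle
end
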